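/- Let M₁ and M₂ be adjacent perfect matchings of K_{2m} (so their symmetric difference C is a cycle of length 4) and let e be any edge of K_{2m}. If e is incident with two vertices of C then M₁*e = M₂*e; otherwise M₁*e and M₂*e are adjacent in 𝒫_m. -/

import Mathlib

open SimpleGraph

/-- A simple graph on `Fin n` is a perfect matching if every vertex is
incident with exactly one edge, i.e. has a unique neighbor. -/
def IsPerfMatching {n : ℕ} (M : SimpleGraph (Fin n)) : Prop :=
  ∀ v, ∃! w, M.Adj v w

/-- A simple graph is (i.e. its edges form) a single cycle of length `n`:
there is a cycle of length `n` passing through all of its edges. -/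
def IsCycleGraphOfLength {V : Type*} (G : SimpleGraph V) (n : ℕ) : Prop :=
  ∃ (v : V) (p : G.Walk v v), p.IsCycle ∧ p.length = n ∧ ∀ e ∈ G.edgeSet, e ∈ p.edges

/-- Two perfect matchings are adjacent in the matching graph `𝒫ₘ` iff they are
distinct and their symmetric difference is a cycle of length four. -/
def MatchAdj {n : ℕ} (M₁ M₂ : SimpleGraph (Fin n)) : Prop :=
  M₁ ≠ M₂ ∧ IsCycleGraphOfLength (symmDiff M₁ M₂) 4

/-- Vertices of the graph `𝒫ₘ`: all perfect matchings of `K_{2m}`. -/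
abbrev PMVertex (m : ℕ) := {M : SimpleGraph (Fin (2 * m)) // IsPerfMatching M}

/-- The graph `𝒫ₘ` of perfect matchings of `K_{2m}`. -/
def matchingGraph (m : ℕ) : SimpleGraph (PMVertex m) where
  Adj M₁ M₂ := MatchAdj M₁.1 M₂.1
  symm := ⟨by
    rintro M₁ M₂ ⟨hne, hc⟩
    exact ⟨hne.symm, by rwa [symmDiff_comm]⟩⟩
  loopless := ⟨fun M h => h.1 rfl⟩

/-- The number of geodesics (shortest paths) between two vertices of a graph. -/
noncomputable def geodesicCount {V : Type*} (G : SimpleGraph V) (u v : V) : ℕ :=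
  Nat.card {p : G.Walk u v // p.IsPath ∧ p.length = G.dist u v}
/-- The unique neighbor of `v` in a (perfect) matching `M`
(junk value `v` itself if `v` has no neighbor). -/
noncomputable def matchOf {V : Type*} (M : SimpleGraph V) (v : V) : V := by
  classical
  exact if h : ∃ w, M.Adj v w then h.choose else v

/-- Insertion `M * e` of an edge `e = {v₁, v₂}` into a perfect matching `M`:
if `e ∈ M` then `M * e = M`; otherwise the edges `{v₁, v₃}` and `{v₂, v₄}` of `M`
incident with `v₁` and `v₂` are deleted and the edges `{v₁, v₂}` and `{v₃, v₄}`
are added. -/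
noncomputable def insertEdge {V : Type*} (M : SimpleGraph V) (e : Sym2 V) : SimpleGraph V := by
  classical
  exact if e ∈ M.edgeSet then M
  else SimpleGraph.fromEdgeSet
    ({f | f ∈ M.edgeSet ∧ ∀ v ∈ e, v ∉ f} ∪ {e, Sym2.map (matchOf M) e})

/-- Iterated insertion `M * (e₁, …, eₙ) = (M * (e₁, …, eₙ₋₁)) * eₙ`. -/
noncomputable def insertEdges {V : Type*} (M : SimpleGraph V) (l : List (Sym2 V)) :
    SimpleGraph V :=
  l.foldl insertEdge M

section AuxLemmas

variable {V : Type*} {M M₁ M₂ : SimpleGraph V}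

/-- general version of `IsPerfMatching`. -/
def IsPerfMatching' (M : SimpleGraph V) : Prop := ∀ v, ∃! w, M.Adj v w

lemma matchOf_adj (hM : IsPerfMatching' M) (v : V) : M.Adj v (matchOf M v) := by
  have h : ∃ w, M.Adj v w := (hM v).exists
  rw [matchOf, dif_pos h]
  exact h.choose_spec

lemma matchOf_eq (hM : IsPerfMatching' M) {v w : V} (h : M.Adj v w) : matchOf M v = w :=
  (hM v).unique (matchOf_adj hM v) h

lemma adj_uniq (hM : IsPerfMatching' M) {v w w' : V} (h : M.Adj v w) (h' : M.Adj v w') : w = w' :=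
  (hM v).unique h h'

lemma matchOf_ne (hM : IsPerfMatching' M) {v₁ v₂ : V} (h : v₁ ≠ v₂) :
    matchOf M v₁ ≠ matchOf M v₂ := by
  intro he
  have h1 := (matchOf_adj hM v₁).symm
  have h2 := (matchOf_adj hM v₂).symm
  rw [he] at h1
  exact h (adj_uniq hM h1 h2)

lemma insertEdge_of_mem {e : Sym2 V} (h : e ∈ M.edgeSet) : insertEdge M e = M := by
  rw [insertEdge, if_pos h]

lemma adj_of_sym2_eq {x y u w : V} (h : s(x,y) = s(u,w)) (h' : M.Adj u w) : M.Adj x y := by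
  rw [← mem_edgeSet, h, mem_edgeSet]; exact h'

lemma symmDiff_adj (G H : SimpleGraph V) (x y : V) :
    (symmDiff G H).Adj x y ↔ (G.Adj x y ∧ ¬ H.Adj x y) ∨ (H.Adj x y ∧ ¬ G.Adj x y) := by
  rw [symmDiff_def]; simp [sdiff_adj]

lemma insertEdge_adj (hM : IsPerfMatching' M) {v₁ v₂ : V} (hne : v₁ ≠ v₂)
    (hnadj : ¬ M.Adj v₁ v₂) (x y : V) :
    (insertEdge M s(v₁, v₂)).Adj x y ↔
      (M.Adj x y ∧ x ≠ v₁ ∧ x ≠ v₂ ∧ y ≠ v₁ ∧ y ≠ v₂) ∨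
        s(x, y) = s(v₁, v₂) ∨ s(x, y) = s(matchOf M v₁, matchOf M v₂) := by
  rw [insertEdge, if_neg (by simpa using hnadj), fromEdgeSet_adj]
  constructor
  · rintro ⟨hmem, hxy⟩
    simp only [Set.mem_union, Set.mem_setOf_eq, Set.mem_insert_iff, Set.mem_singleton_iff,
      Sym2.map_pair_eq, mem_edgeSet, Sym2.mem_iff, Sym2.forall] at hmem
    rcases hmem with ⟨hadj, hfa⟩ | he | hg
    · refine Or.inl ⟨hadj, ?_, ?_, ?_, ?_⟩ <;>
      · intro hh; subst hh
        first
        | exact (hfa v₁ (Or.inl rfl)) (by simp)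
        | exact (hfa v₂ (Or.inr rfl)) (by simp)
        | exact (hfa x (by simp)) (by simp)
        | exact (hfa y (by simp)) (by simp)
    · exact Or.inr (Or.inl he)
    · exact Or.inr (Or.inr hg)
  · rintro (⟨hadj, h1, h2, h3, h4⟩ | he | hg)
    · refine ⟨Or.inl ⟨hadj, ?_⟩, hadj.ne⟩
      intro v hv hvf
      simp only [Sym2.mem_iff] at hv hvf
      rcases hv with rfl | rfl <;> rcases hvf with rfl | rfl <;> simp_all
    · refine ⟨Or.inr (Or.inl he), ?_⟩
      rw [Sym2.eq_iff] at he
      rcases he with ⟨rfl, rfl⟩ | ⟨rfl, rfl⟩ <;> [exact hne; exact hne.symm]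
    · refine ⟨Or.inr (Or.inr (by rw [hg, Sym2.map_pair_eq]; simp)), ?_⟩
      rw [Sym2.eq_iff] at hg
      have hmne := matchOf_ne hM hne
      rcases hg with ⟨rfl, rfl⟩ | ⟨rfl, rfl⟩ <;> [exact hmne; exact hmne.symm]

lemma extract {M₁ M₂ : SimpleGraph V} (hM₁ : IsPerfMatching' M₁) (hM₂ : IsPerfMatching' M₂)
    (h : IsCycleGraphOfLength (symmDiff M₁ M₂) 4) :
    ∃ a b c d : V, a ≠ b ∧ a ≠ c ∧ a ≠ d ∧ b ≠ c ∧ b ≠ d ∧ c ≠ d ∧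
      M₁.Adj a b ∧ M₁.Adj c d ∧ M₂.Adj b c ∧ M₂.Adj d a ∧
      (∀ x y, (symmDiff M₁ M₂).Adj x y ↔
        (s(x,y) = s(a,b) ∨ s(x,y) = s(b,c) ∨ s(x,y) = s(c,d) ∨ s(x,y) = s(d,a))) := by
  obtain ⟨v, p, hcyc, hlen, hcov⟩ := h
  cases p with
  | nil => simp at hlen
  | cons h₁ p₁ =>
  cases p₁ with
  | nil => simp at hlen
  | cons h₂ p₂ =>
  cases p₂ with
  | nil => simp at hlen
  | cons h₃ p₃ =>
  cases p₃ with
  | nil => simp at hlen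
  | cons h₄ p₄ =>
  cases p₄ with
  | cons h₅ p₅ => simp [Walk.length_cons] at hlen
  | nil =>
    rename_i x₁ x₂ x₃
    have hnd := hcyc.support_nodup
    simp [Walk.support_cons, List.nodup_cons] at hnd
    have hcov' : ∀ x y : V, (symmDiff M₁ M₂).Adj x y ↔
        (s(x,y) = s(v,x₁) ∨ s(x,y) = s(x₁,x₂) ∨ s(x,y) = s(x₂,x₃) ∨ s(x,y) = s(x₃,v)) := by
      intro x y
      constructor
      · intro hadj
        have := hcov s(x,y) hadj
        simpa using this
      · rintro (he | he | he | he) <;>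
          (rw [← mem_edgeSet, he, mem_edgeSet]; first | exact h₁ | exact h₂ | exact h₃ | exact h₄)
    obtain ⟨⟨h12, h13, h1v⟩, ⟨h23, h2v⟩, h3v⟩ := hnd
    rcases (symmDiff_adj M₁ M₂ v x₁).mp h₁ with ⟨ha, ha'⟩ | ⟨ha, ha'⟩
    · -- M₁ has v-x₁
      have hb : M₂.Adj x₁ x₂ := by
        rcases (symmDiff_adj M₁ M₂ x₁ x₂).mp h₂ with ⟨hb, _⟩ | ⟨hb, _⟩
        · exact absurd (adj_uniq hM₁ ha.symm hb) (fun hh => h2v hh.symm)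
        · exact hb
      have hc : M₁.Adj x₂ x₃ := by
        rcases (symmDiff_adj M₁ M₂ x₂ x₃).mp h₃ with ⟨hc, _⟩ | ⟨hc, _⟩
        · exact hc
        · exact absurd (adj_uniq hM₂ hb.symm hc) h13
      have hd : M₂.Adj x₃ v := by
        rcases (symmDiff_adj M₁ M₂ x₃ v).mp h₄ with ⟨hd, _⟩ | ⟨hd, _⟩
        · exact absurd (adj_uniq hM₁ hc.symm hd) (fun hh => h2v hh)
        · exact hd
      exact ⟨v, x₁, x₂, x₃, fun hh => h1v hh.symm, fun hh => h2v hh.symm,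
        fun hh => h3v hh.symm, h12, h13, h23, ha, hc, hb, hd, hcov'⟩
    · -- M₂ has v-x₁
      have hb : M₁.Adj x₁ x₂ := by
        rcases (symmDiff_adj M₁ M₂ x₁ x₂).mp h₂ with ⟨hb, _⟩ | ⟨hb, _⟩
        · exact hb
        · exact absurd (adj_uniq hM₂ ha.symm hb) (fun hh => h2v hh.symm)
      have hc : M₂.Adj x₂ x₃ := by
        rcases (symmDiff_adj M₁ M₂ x₂ x₃).mp h₃ with ⟨hc, _⟩ | ⟨hc, _⟩
        · exact absurd (adj_uniq hM₁ hb.symm hc) h13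
        · exact hc
      have hd : M₁.Adj x₃ v := by
        rcases (symmDiff_adj M₁ M₂ x₃ v).mp h₄ with ⟨hd, _⟩ | ⟨hd, _⟩
        · exact hd
        · exact absurd (adj_uniq hM₂ hc.symm hd) (fun hh => h2v hh)
      refine ⟨x₁, x₂, x₃, v, h12, h13, h1v, h23,
        h2v, h3v, hb, hd, hc, ha, fun x y => ?_⟩
      rw [hcov' x y]
      tauto

section Helpers1

variable {a b c d : V}
  (hM₁ : IsPerfMatching' M₁) (hM₂ : IsPerfMatching' M₂)
  (nab : a ≠ b) (nac : a ≠ c) (nad : a ≠ d) (nbc : b ≠ c) (nbd : b ≠ d) (ncd : c ≠ d)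
  (hab : M₁.Adj a b) (hcd : M₁.Adj c d) (hbc : M₂.Adj b c) (hda : M₂.Adj d a)
  (hC : ∀ x y, (symmDiff M₁ M₂).Adj x y ↔
    (s(x,y) = s(a,b) ∨ s(x,y) = s(b,c) ∨ s(x,y) = s(c,d) ∨ s(x,y) = s(d,a)))

include hM₁ hM₂ nab nac nad nbc nbd ncd hab hcd hbc hda hC

lemma helperA : insertEdge M₁ s(a,b) = insertEdge M₂ s(a,b) := by
  have nM₂ab : ¬ M₂.Adj a b := fun h => nbd.symm (adj_uniq hM₂ hda.symm h)
  have nM₂cd : ¬ M₂.Adj c d := fun h => nbd (adj_uniq hM₂ hbc.symm h)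
  have nM₁bc : ¬ M₁.Adj b c := fun h => nac (adj_uniq hM₁ hab.symm h)
  have nM₁da : ¬ M₁.Adj d a := fun h => nac.symm (adj_uniq hM₁ hcd.symm h)
  rw [insertEdge_of_mem ((mem_edgeSet M₁).mpr hab)]
  ext x y
  rw [insertEdge_adj hM₂ nab nM₂ab, matchOf_eq hM₂ hda.symm, matchOf_eq hM₂ hbc]
  constructor
  · intro h1
    by_cases e1 : s(x,y) = s(a,b)
    · exact Or.inr (Or.inl e1)
    by_cases e2 : s(x,y) = s(c,d)
    · exact Or.inr (Or.inr (e2.trans (Sym2.eq_swap)))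
    have h2 : M₂.Adj x y := by
      by_contra h2
      rcases (hC x y).mp ((symmDiff_adj M₁ M₂ x y).mpr (Or.inl ⟨h1, h2⟩)) with e | e | e | e
      · exact e1 e
      · exact nM₁bc (adj_of_sym2_eq e.symm h1)
      · exact e2 e
      · exact nM₁da (adj_of_sym2_eq e.symm h1)
    refine Or.inl ⟨h2, ?_, ?_, ?_, ?_⟩
    · rintro rfl; exact e1 (by rw [adj_uniq hM₁ hab h1])
    · rintro rfl
      exact e1 (by rw [adj_uniq hM₁ hab.symm h1, Sym2.eq_swap])
    · rintro rfl
      exact e1 (by rw [adj_uniq hM₁ hab h1.symm, Sym2.eq_swap])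
    · rintro rfl; exact e1 (by rw [adj_uniq hM₁ hab.symm h1.symm])
  · rintro (⟨h2, hxa, hxb, hya, hyb⟩ | he | he)
    · by_contra h1
      rcases (hC x y).mp ((symmDiff_adj M₁ M₂ x y).mpr (Or.inr ⟨h2, h1⟩)) with e | e | e | e <;>
        rw [Sym2.eq_iff] at e
      · rcases e with ⟨rfl, rfl⟩ | ⟨rfl, rfl⟩ <;> simp_all
      · rcases e with ⟨rfl, rfl⟩ | ⟨rfl, rfl⟩ <;> simp_all
      · exact h1 (adj_of_sym2_eq (Sym2.eq_iff.mpr e) hcd)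
      · rcases e with ⟨rfl, rfl⟩ | ⟨rfl, rfl⟩ <;> simp_all
    · exact adj_of_sym2_eq he hab
    · exact adj_of_sym2_eq (he.trans Sym2.eq_swap) hcd

lemma helperB : insertEdge M₁ s(a,c) = insertEdge M₂ s(a,c) := by
  have nM₁ac : ¬ M₁.Adj a c := fun h => nbc (adj_uniq hM₁ hab h)
  have nM₂ac : ¬ M₂.Adj a c := fun h => ncd (adj_uniq hM₂ hda.symm h).symm
  have agree : ∀ x y : V, x ≠ a → x ≠ c → y ≠ a → y ≠ c → (M₁.Adj x y ↔ M₂.Adj x y) := by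
    intro x y hxa hxc hya hyc
    by_contra hne
    have : (symmDiff M₁ M₂).Adj x y := by
      rw [symmDiff_adj]; tauto
    rcases (hC x y).mp this with e | e | e | e <;> rw [Sym2.eq_iff] at e <;>
      rcases e with ⟨rfl, rfl⟩ | ⟨rfl, rfl⟩ <;> simp_all
  ext x y
  rw [insertEdge_adj hM₁ nac nM₁ac, insertEdge_adj hM₂ nac nM₂ac,
    matchOf_eq hM₁ hab, matchOf_eq hM₁ hcd, matchOf_eq hM₂ hda.symm, matchOf_eq hM₂ hbc.symm]
  have : s(d, b) = s(b, d) := Sym2.eq_swap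
  rw [this]
  constructor
  · rintro (⟨h1, h2, h3, h4, h5⟩ | he | he)
    · exact Or.inl ⟨(agree x y h2 h3 h4 h5).mp h1, h2, h3, h4, h5⟩
    · exact Or.inr (Or.inl he)
    · exact Or.inr (Or.inr he)
  · rintro (⟨h1, h2, h3, h4, h5⟩ | he | he)
    · exact Or.inl ⟨(agree x y h2 h3 h4 h5).mpr h1, h2, h3, h4, h5⟩
    · exact Or.inr (Or.inl he)
    · exact Or.inr (Or.inr he)

end Helpers1

lemma helperC (hM₁ : IsPerfMatching' M₁) (hM₂ : IsPerfMatching' M₂) {v₁ v₂ : V}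
    (hv : v₁ ≠ v₂)
    (hv₁ : v₁ ∉ (symmDiff M₁ M₂).support) (hv₂ : v₂ ∉ (symmDiff M₁ M₂).support) :
    symmDiff (insertEdge M₁ s(v₁,v₂)) (insertEdge M₂ s(v₁,v₂)) = symmDiff M₁ M₂ := by
  simp only [mem_support, not_exists] at hv₁ hv₂
  have agree₁ : ∀ y, M₁.Adj v₁ y ↔ M₂.Adj v₁ y := by
    intro y
    have := hv₁ y
    rw [symmDiff_adj] at this
    tauto
  have agree₂ : ∀ y, M₁.Adj v₂ y ↔ M₂.Adj v₂ y := by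
    intro y
    have := hv₂ y
    rw [symmDiff_adj] at this
    tauto
  by_cases hmem : M₁.Adj v₁ v₂
  · rw [insertEdge_of_mem ((mem_edgeSet M₁).mpr hmem),
      insertEdge_of_mem ((mem_edgeSet M₂).mpr ((agree₁ v₂).mp hmem))]
  · have hmem₂ : ¬ M₂.Adj v₁ v₂ := fun h => hmem ((agree₁ v₂).mpr h)
    set w₁ := matchOf M₁ v₁ with hw₁def
    set w₂ := matchOf M₁ v₂ with hw₂def
    have hw₁ : M₁.Adj v₁ w₁ := matchOf_adj hM₁ v₁
    have hw₂ : M₁.Adj v₂ w₂ := matchOf_adj hM₁ v₂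
    have hw₁' : M₂.Adj v₁ w₁ := (agree₁ w₁).mp hw₁
    have hw₂' : M₂.Adj v₂ w₂ := (agree₂ w₂).mp hw₂
    have hm₂₁ : matchOf M₂ v₁ = w₁ := matchOf_eq hM₂ hw₁'
    have hm₂₂ : matchOf M₂ v₂ = w₂ := matchOf_eq hM₂ hw₂'
    have ng₁ : ¬ M₁.Adj w₁ w₂ := by
      intro h
      have : v₁ = w₂ := adj_uniq hM₁ hw₁.symm h
      exact hmem (this ▸ hw₂.symm)
    have ng₂ : ¬ M₂.Adj w₁ w₂ := by
      intro h
      have : v₁ = w₂ := adj_uniq hM₂ hw₁'.symm h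
      exact hmem₂ (this ▸ hw₂'.symm)
    ext x y
    rw [symmDiff_adj, symmDiff_adj, insertEdge_adj hM₁ hv hmem, insertEdge_adj hM₂ hv hmem₂,
      hm₂₁, hm₂₂, ← hw₁def, ← hw₂def]
    have hE1 : s(x,y) = s(v₁,v₂) → ¬ M₁.Adj x y := fun he h => hmem (adj_of_sym2_eq he.symm h)
    have hE2 : s(x,y) = s(v₁,v₂) → ¬ M₂.Adj x y := fun he h => hmem₂ (adj_of_sym2_eq he.symm h)
    have hG1 : s(x,y) = s(w₁,w₂) → ¬ M₁.Adj x y := fun he h => ng₁ (adj_of_sym2_eq he.symm h)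
    have hG2 : s(x,y) = s(w₁,w₂) → ¬ M₂.Adj x y := fun he h => ng₂ (adj_of_sym2_eq he.symm h)
    have havoid : ((M₁.Adj x y ∧ ¬ M₂.Adj x y) ∨ (M₂.Adj x y ∧ ¬ M₁.Adj x y)) →
        (x ≠ v₁ ∧ x ≠ v₂ ∧ y ≠ v₁ ∧ y ≠ v₂) := by
      rintro (⟨h1, h2⟩ | ⟨h1, h2⟩) <;>
        refine ⟨?_, ?_, ?_, ?_⟩ <;> rintro rfl <;>
        first
          | exact h2 ((agree₁ _).mp h1)
          | exact h2 ((agree₂ _).mp h1)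
          | exact h2 ((agree₁ _).mp h1.symm).symm
          | exact h2 ((agree₂ _).mp h1.symm).symm
          | exact h2 ((agree₁ _).mpr h1)
          | exact h2 ((agree₂ _).mpr h1)
          | exact h2 ((agree₁ _).mpr h1.symm).symm
          | exact h2 ((agree₂ _).mpr h1.symm).symm
    constructor
    · rintro (⟨hl, hr⟩ | ⟨hl, hr⟩)
      · rcases hl with ⟨hA, hav⟩ | hE | hG
        · exact Or.inl ⟨hA, fun h2 => hr (Or.inl ⟨h2, hav⟩)⟩
        · exact absurd (Or.inr (Or.inl hE)) hr
        · exact absurd (Or.inr (Or.inr hG)) hr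
      · rcases hl with ⟨hA, hav⟩ | hE | hG
        · exact Or.inr ⟨hA, fun h2 => hr (Or.inl ⟨h2, hav⟩)⟩
        · exact absurd (Or.inr (Or.inl hE)) hr
        · exact absurd (Or.inr (Or.inr hG)) hr
    · rintro (⟨h1, h2⟩ | ⟨h1, h2⟩)
      · have hav := havoid (Or.inl ⟨h1, h2⟩)
        refine Or.inl ⟨Or.inl ⟨h1, hav⟩, ?_⟩
        rintro (⟨hA2, _⟩ | hE | hG)
        · exact h2 hA2
        · exact hE1 hE h1
        · exact hG1 hG h1
      · have hav := havoid (Or.inr ⟨h1, h2⟩)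
        refine Or.inr ⟨Or.inl ⟨h1, hav⟩, ?_⟩
        rintro (⟨hA1, _⟩ | hE | hG)
        · exact h2 hA1
        · exact hE2 hE h1
        · exact hG2 hG h1

lemma helperD {a b c d : V}
    (hM₁ : IsPerfMatching' M₁) (hM₂ : IsPerfMatching' M₂)
    (nab : a ≠ b) (nac : a ≠ c) (nad : a ≠ d) (nbc : b ≠ c) (nbd : b ≠ d) (ncd : c ≠ d)
    (hab : M₁.Adj a b) (hcd : M₁.Adj c d) (hbc : M₂.Adj b c) (hda : M₂.Adj d a)
    (hC : ∀ x y, (symmDiff M₁ M₂).Adj x y ↔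
      (s(x,y) = s(a,b) ∨ s(x,y) = s(b,c) ∨ s(x,y) = s(c,d) ∨ s(x,y) = s(d,a)))
    {u : V} (hua : u ≠ a) (hub : u ≠ b) (huc : u ≠ c) (hud : u ≠ d) :
    insertEdge M₁ s(a,u) ≠ insertEdge M₂ s(a,u) ∧
    IsCycleGraphOfLength (symmDiff (insertEdge M₁ s(a,u)) (insertEdge M₂ s(a,u))) 4 := by
  set w := matchOf M₁ u with hwdef
  have hw : M₁.Adj u w := matchOf_adj hM₁ u
  have hwa : w ≠ a := by rintro rfl; exact hub (adj_uniq hM₁ hab hw.symm).symm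
  have hwb : w ≠ b := by rintro rfl; exact hua (adj_uniq hM₁ hab.symm hw.symm).symm
  have hwc : w ≠ c := by rintro rfl; exact hud (adj_uniq hM₁ hcd hw.symm).symm
  have hwd : w ≠ d := by rintro rfl; exact huc (adj_uniq hM₁ hcd.symm hw.symm).symm
  have hwu : w ≠ u := hw.ne'
  have hw₂ : M₂.Adj u w := by
    by_contra hcon
    rcases (hC u w).mp ((symmDiff_adj M₁ M₂ u w).mpr (Or.inl ⟨hw, hcon⟩)) with e|e|e|e <;>
      rw [Sym2.eq_iff] at e <;> rcases e with ⟨rfl,rfl⟩|⟨rfl,rfl⟩ <;> simp_all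
  have na₁ : ¬ M₁.Adj a u := fun h => hub (adj_uniq hM₁ hab h).symm
  have na₂ : ¬ M₂.Adj a u := fun h => hud (adj_uniq hM₂ hda.symm h).symm
  have nau : a ≠ u := hua.symm
  have hm1a : matchOf M₁ a = b := matchOf_eq hM₁ hab
  have hm2a : matchOf M₂ a = d := matchOf_eq hM₂ hda.symm
  have hm2u : matchOf M₂ u = w := matchOf_eq hM₂ hw₂
  have nbw₂ : ¬ M₂.Adj b w := fun h => hwc (adj_uniq hM₂ hbc h).symm
  have ndw₁ : ¬ M₁.Adj d w := fun h => hwc (adj_uniq hM₁ hcd.symm h).symm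
  have nbc₁ : ¬ M₁.Adj b c := fun h => nac (adj_uniq hM₁ hab.symm h)
  have ncd₂ : ¬ M₂.Adj c d := fun h => nbd (adj_uniq hM₂ hbc.symm h)
  set L := insertEdge M₁ s(a,u) with hLdef
  set R := insertEdge M₂ s(a,u) with hRdef
  have Ladj : ∀ x y, L.Adj x y ↔
      (M₁.Adj x y ∧ x ≠ a ∧ x ≠ u ∧ y ≠ a ∧ y ≠ u) ∨
        s(x, y) = s(a, u) ∨ s(x, y) = s(b, w) := by
    intro x y
    rw [hLdef, insertEdge_adj hM₁ nau na₁, hm1a, ← hwdef]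
  have Radj : ∀ x y, R.Adj x y ↔
      (M₂.Adj x y ∧ x ≠ a ∧ x ≠ u ∧ y ≠ a ∧ y ≠ u) ∨
        s(x, y) = s(a, u) ∨ s(x, y) = s(d, w) := by
    intro x y
    rw [hRdef, insertEdge_adj hM₂ nau na₂, hm2a, hm2u]
  -- the four concrete adjacencies of the new symmetric difference
  have adj_bc : (symmDiff L R).Adj b c := by
    rw [symmDiff_adj, Ladj, Radj]
    refine Or.inr ⟨Or.inl ⟨hbc, nab.symm, hub.symm, nac.symm, huc.symm⟩, ?_⟩
    rintro (⟨hA, _⟩ | hE | hG)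
    · exact nbc₁ hA
    · rw [Sym2.eq_iff] at hE
      rcases hE with ⟨h1, h2⟩|⟨h1, h2⟩; exacts [nab h1.symm, hub h1.symm]
    · rw [Sym2.eq_iff] at hG
      rcases hG with ⟨h1, h2⟩|⟨h1, h2⟩; exacts [hwc h2.symm, hwb h1.symm]
  have adj_cd : (symmDiff L R).Adj c d := by
    rw [symmDiff_adj, Ladj, Radj]
    refine Or.inl ⟨Or.inl ⟨hcd, nac.symm, huc.symm, nad.symm, hud.symm⟩, ?_⟩
    rintro (⟨hA, _⟩ | hE | hG)
    · exact ncd₂ hA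
    · rw [Sym2.eq_iff] at hE
      rcases hE with ⟨h1, h2⟩|⟨h1, h2⟩; exacts [nac h1.symm, huc h1.symm]
    · rw [Sym2.eq_iff] at hG
      rcases hG with ⟨h1, h2⟩|⟨h1, h2⟩; exacts [hwd h2.symm, hwc h1.symm]
  have adj_dw : (symmDiff L R).Adj d w := by
    rw [symmDiff_adj, Ladj, Radj]
    refine Or.inr ⟨Or.inr (Or.inr rfl), ?_⟩
    rintro (⟨hA, _⟩ | hE | hG)
    · exact ndw₁ hA
    · rw [Sym2.eq_iff] at hE
      rcases hE with ⟨h1, h2⟩|⟨h1, h2⟩; exacts [nad h1.symm, hud (h1.symm)]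
    · rw [Sym2.eq_iff] at hG
      rcases hG with ⟨h1, h2⟩|⟨h1, h2⟩; exacts [nbd h1.symm, hwd h1.symm]
  have adj_wb : (symmDiff L R).Adj w b := by
    rw [symmDiff_adj, Ladj, Radj]
    refine Or.inl ⟨Or.inr (Or.inr Sym2.eq_swap), ?_⟩
    rintro (⟨hA, _⟩ | hE | hG)
    · exact nbw₂ hA.symm
    · rw [Sym2.eq_iff] at hE
      rcases hE with ⟨h1, h2⟩|⟨h1, h2⟩; exacts [hwa h1, nab h2.symm]
    · rw [Sym2.eq_iff] at hG
      rcases hG with ⟨h1, h2⟩|⟨h1, h2⟩; exacts [hwd h1, nbd h2]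
  have key : ∀ x y, (symmDiff L R).Adj x y →
      (s(x,y) = s(b,c) ∨ s(x,y) = s(c,d) ∨ s(x,y) = s(d,w) ∨ s(x,y) = s(w,b)) := by
    intro x y hxy
    rw [symmDiff_adj, Ladj, Radj] at hxy
    rcases hxy with ⟨hl, hr⟩ | ⟨hl, hr⟩
    · rcases hl with ⟨hA, hx1, hx2, hy1, hy2⟩ | hE | hG
      · have hA2 : ¬ M₂.Adj x y := fun h2 => hr (Or.inl ⟨h2, hx1, hx2, hy1, hy2⟩)
        rcases (hC x y).mp ((symmDiff_adj M₁ M₂ x y).mpr (Or.inl ⟨hA, hA2⟩)) with e|e|e|e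
        · rw [Sym2.eq_iff] at e; rcases e with ⟨rfl,rfl⟩|⟨rfl,rfl⟩ <;> simp_all
        · exact Or.inl e
        · exact Or.inr (Or.inl e)
        · rw [Sym2.eq_iff] at e; rcases e with ⟨rfl,rfl⟩|⟨rfl,rfl⟩ <;> simp_all
      · exact absurd (Or.inr (Or.inl hE)) hr
      · exact Or.inr (Or.inr (Or.inr (hG.trans Sym2.eq_swap)))
    · rcases hl with ⟨hA, hx1, hx2, hy1, hy2⟩ | hE | hG
      · have hA1 : ¬ M₁.Adj x y := fun h1 => hr (Or.inl ⟨h1, hx1, hx2, hy1, hy2⟩)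
        rcases (hC x y).mp ((symmDiff_adj M₁ M₂ x y).mpr (Or.inr ⟨hA, hA1⟩)) with e|e|e|e
        · rw [Sym2.eq_iff] at e; rcases e with ⟨rfl,rfl⟩|⟨rfl,rfl⟩ <;> simp_all
        · exact Or.inl e
        · exact Or.inr (Or.inl e)
        · rw [Sym2.eq_iff] at e; rcases e with ⟨rfl,rfl⟩|⟨rfl,rfl⟩ <;> simp_all
      · exact absurd (Or.inr (Or.inl hE)) hr
      · exact Or.inr (Or.inr (Or.inl hG))
  constructor
  · intro heq
    have hadj := adj_bc
    rw [heq, symmDiff_self] at hadj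
    simp at hadj
  · refine ⟨b, Walk.cons adj_bc (Walk.cons adj_cd (Walk.cons adj_dw
      (Walk.cons adj_wb Walk.nil))), ?_, by simp, ?_⟩
    · rw [Walk.isCycle_def]
      refine ⟨⟨?_⟩, by simp, ?_⟩
      · simp [Walk.edges_cons, Sym2.eq_iff]
        tauto
      · simp [Walk.support_cons]
        tauto
    · intro e he
      induction e using Sym2.ind with
      | _ x y =>
        rw [mem_edgeSet] at he
        rcases key x y he with e|e|e|e <;>
          simp only [Walk.edges_cons, Walk.edges_nil, List.mem_cons, List.not_mem_nil, or_false] <;>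
          tauto

end AuxLemmas

/-- Let `M₁ ~ M₂` be adjacent perfect matchings of `K_{2m}`, with symmetric
difference the 4-cycle `C`, and let `e = {v₁, v₂}` be an edge of `K_{2m}`.
If `e` is incident with two vertices of `C` then `M₁ * e = M₂ * e`; otherwise
`M₁ * e` and `M₂ * e` are adjacent in `𝒫ₘ`. -/

theorem stmt7 (m : ℕ) (M₁ M₂ : PMVertex m) (h : (matchingGraph m).Adj M₁ M₂)
    (v₁ v₂ : Fin (2 * m)) (hv : v₁ ≠ v₂) :
    (v₁ ∈ (symmDiff M₁.1 M₂.1).support ∧ v₂ ∈ (symmDiff M₁.1 M₂.1).support →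
      insertEdge M₁.1 s(v₁, v₂) = insertEdge M₂.1 s(v₁, v₂)) ∧
    (¬(v₁ ∈ (symmDiff M₁.1 M₂.1).support ∧ v₂ ∈ (symmDiff M₁.1 M₂.1).support) →
      MatchAdj (insertEdge M₁.1 s(v₁, v₂)) (insertEdge M₂.1 s(v₁, v₂)))  := by
  have hM₁ : IsPerfMatching' M₁.1 := M₁.2
  have hM₂ : IsPerfMatching' M₂.1 := M₂.2
  have hmadj : MatchAdj M₁.1 M₂.1 := h
  obtain ⟨a, b, c, d, nab, nac, nad, nbc, nbd, ncd, hab, hcd, hbc, hda, hC⟩ :=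
    extract hM₁ hM₂ hmadj.2
  have hC2 : ∀ x y, (symmDiff M₂.1 M₁.1).Adj x y ↔
      (s(x,y) = s(b,c) ∨ s(x,y) = s(c,d) ∨ s(x,y) = s(d,a) ∨ s(x,y) = s(a,b)) := by
    intro x y; rw [symmDiff_comm, hC x y]; tauto
  have hC3 : ∀ x y, (symmDiff M₁.1 M₂.1).Adj x y ↔
      (s(x,y) = s(c,d) ∨ s(x,y) = s(d,a) ∨ s(x,y) = s(a,b) ∨ s(x,y) = s(b,c)) := by
    intro x y; rw [hC x y]; tauto
  have hC4 : ∀ x y, (symmDiff M₂.1 M₁.1).Adj x y ↔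
      (s(x,y) = s(d,a) ∨ s(x,y) = s(a,b) ∨ s(x,y) = s(b,c) ∨ s(x,y) = s(c,d)) := by
    intro x y; rw [symmDiff_comm, hC x y]; tauto
  have hsupp : ∀ x, x ∈ (symmDiff M₁.1 M₂.1).support ↔ (x = a ∨ x = b ∨ x = c ∨ x = d) := by
    intro x
    rw [mem_support]
    constructor
    · rintro ⟨y, hy⟩
      rcases (hC x y).mp hy with e|e|e|e <;> rw [Sym2.eq_iff] at e <;> tauto
    · rintro (rfl|rfl|rfl|rfl)
      exacts [⟨b, (hC x b).mpr (Or.inl rfl)⟩, ⟨c, (hC x c).mpr (Or.inr (Or.inl rfl))⟩,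
        ⟨d, (hC x d).mpr (Or.inr (Or.inr (Or.inl rfl)))⟩,
        ⟨a, (hC x a).mpr (Or.inr (Or.inr (Or.inr rfl)))⟩]
  constructor
  · rintro ⟨h1, h2⟩
    rw [hsupp] at h1 h2
    have eAB := helperA hM₁ hM₂ nab nac nad nbc nbd ncd hab hcd hbc hda hC
    have eCD := helperA hM₁ hM₂ ncd nac.symm nbc.symm nad.symm nbd.symm nab hcd hab hda hbc hC3
    have eBC := (helperA hM₂ hM₁ nbc nbd nab.symm ncd nac.symm nad.symm hbc hda hcd hab hC2).symm
    have eDA := (helperA hM₂ hM₁ nad.symm nbd.symm ncd.symm nab nac nbc hda hbc hab hcd hC4).symm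
    have eAC := helperB hM₁ hM₂ nab nac nad nbc nbd ncd hab hcd hbc hda hC
    have eBD := (helperB hM₂ hM₁ nbc nbd nab.symm ncd nac.symm nad.symm hbc hda hcd hab hC2).symm
    rcases h1 with rfl|rfl|rfl|rfl <;> rcases h2 with rfl|rfl|rfl|rfl <;>
      first
        | exact absurd rfl hv
        | exact eAB | exact eCD | exact eBC | exact eDA | exact eAC | exact eBD
        | (rw [Sym2.eq_swap]
           first | exact eAB | exact eCD | exact eBC | exact eDA | exact eAC | exact eBD)
  · intro hncase
    by_cases m1 : v₁ ∈ (symmDiff M₁.1 M₂.1).support <;>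
      by_cases m2 : v₂ ∈ (symmDiff M₁.1 M₂.1).support
    · exact absurd ⟨m1, m2⟩ hncase
    · rw [hsupp] at m1
      rw [hsupp] at m2; push_neg at m2; obtain ⟨ha', hb', hc', hd'⟩ := m2
      rcases m1 with rfl|rfl|rfl|rfl
      · exact helperD hM₁ hM₂ nab nac nad nbc nbd ncd hab hcd hbc hda hC ha' hb' hc' hd'
      · obtain ⟨hn, hcy⟩ := helperD hM₂ hM₁ nbc nbd nab.symm ncd nac.symm nad.symm hbc hda
          hcd hab hC2 hb' hc' hd' ha'
        exact ⟨fun hh => hn hh.symm, by rwa [symmDiff_comm]⟩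
      · exact helperD hM₁ hM₂ ncd nac.symm nbc.symm nad.symm nbd.symm nab hcd hab hda hbc hC3
          hc' hd' ha' hb'
      · obtain ⟨hn, hcy⟩ := helperD hM₂ hM₁ nad.symm nbd.symm ncd.symm nab nac nbc hda hbc
          hab hcd hC4 hd' ha' hb' hc'
        exact ⟨fun hh => hn hh.symm, by rwa [symmDiff_comm]⟩
    · rw [hsupp] at m2
      rw [hsupp] at m1; push_neg at m1; obtain ⟨ha', hb', hc', hd'⟩ := m1
      rw [show s(v₁, v₂) = s(v₂, v₁) from Sym2.eq_swap]
      rcases m2 with rfl|rfl|rfl|rfl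
      · exact helperD hM₁ hM₂ nab nac nad nbc nbd ncd hab hcd hbc hda hC ha' hb' hc' hd'
      · obtain ⟨hn, hcy⟩ := helperD hM₂ hM₁ nbc nbd nab.symm ncd nac.symm nad.symm hbc hda
          hcd hab hC2 hb' hc' hd' ha'
        exact ⟨fun hh => hn hh.symm, by rwa [symmDiff_comm]⟩
      · exact helperD hM₁ hM₂ ncd nac.symm nbc.symm nad.symm nbd.symm nab hcd hab hda hbc hC3
          hc' hd' ha' hb'
      · obtain ⟨hn, hcy⟩ := helperD hM₂ hM₁ nad.symm nbd.symm ncd.symm nab nac nbc hda hbc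
          hab hcd hC4 hd' ha' hb' hc'
        exact ⟨fun hh => hn hh.symm, by rwa [symmDiff_comm]⟩
    · have hsd := helperC hM₁ hM₂ hv m1 m2
      refine ⟨fun heq => hmadj.1 ?_, ?_⟩
      · apply symmDiff_eq_bot.mp
        rw [← hsd, heq, symmDiff_self]
      · rw [hsd]
        exact hmadj.2
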